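/- Let N ≥ 2, α ∈ (0,1), R > 0, and let θ ∈ ℝ^{N-1} with |θ| = 1. Then ∫_{ℝ^{N-1}} (1 + ∏_{i=1}^{N-1} cos(t_i θ_i)) (|t|² + 4R²)^{−(N+α)/2} dt = ∫_{ℝ^{N-1}} (1 + cos t₁) (|t|² + 4R²)^{−(N+α)/2} dt, both integrals being absolutely convergent; in particular the left-hand side depends only on R and not on the unit vector θ. -/

import Mathlib

open MeasureTheory Real Filter Topology

open Finset RealInnerProductSpace in
/-- product of cosines as an average of cosines of signed sums -/
private lemma prod_cos_eq (n : ℕ) (a : Fin n → ℝ) :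
    ∏ i, Real.cos (a i) =
      (∑ s : Fin n → Bool, Real.cos (∑ i, (if s i then (1:ℝ) else -1) * a i)) / 2 ^ n := by
  have h1 : ∀ i : Fin n, Complex.cos (a i)
      = (∑ b : Bool, Complex.exp (((if b then (1:ℝ) else -1) * a i : ℝ) * Complex.I)) / 2 := by
    intro i
    rw [Complex.cos, Fintype.sum_bool]
    norm_num
  have hexp : ∀ s : Fin n → Bool,
      (∏ i, Complex.exp (((if s i then (1:ℝ) else -1) * a i : ℝ) * Complex.I))
        = Complex.exp ((↑(∑ i, (if s i then (1:ℝ) else -1) * a i) : ℂ) * Complex.I) := by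
    intro s
    rw [← Complex.exp_sum]
    congr 1
    push_cast
    rw [Finset.sum_mul]
  have key : (∏ i, Complex.cos (a i)) =
      (∑ s : Fin n → Bool,
        Complex.exp ((↑(∑ i, (if s i then (1:ℝ) else -1) * a i) : ℂ) * Complex.I)) / 2 ^ n := by
    calc (∏ i, Complex.cos (a i))
        = ∏ i, ((∑ b : Bool, Complex.exp (((if b then (1:ℝ) else -1) * a i : ℝ) * Complex.I)) / 2) :=
          Finset.prod_congr rfl fun i _ => h1 i
      _ = (∏ i, ∑ b : Bool, Complex.exp (((if b then (1:ℝ) else -1) * a i : ℝ) * Complex.I)) / 2 ^ n := by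
          rw [Finset.prod_div_distrib, Finset.prod_const, Finset.card_univ, Fintype.card_fin]
      _ = (∑ s ∈ Fintype.piFinset (fun _ : Fin n => (Finset.univ : Finset Bool)),
            ∏ i, Complex.exp (((if s i then (1:ℝ) else -1) * a i : ℝ) * Complex.I)) / 2 ^ n := by
          rw [Finset.prod_univ_sum]
      _ = _ := by
          rw [Fintype.piFinset_univ]
          exact congrArg (· / 2 ^ n) (Finset.sum_congr rfl fun s _ => hexp s)
  have h := congrArg Complex.re key
  rw [show ((2 : ℂ) ^ n) = ((2 ^ n : ℝ) : ℂ) by push_cast; ring] at h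
  simpa only [← Complex.ofReal_cos, ← Complex.ofReal_prod, Complex.ofReal_re,
    Complex.div_ofReal_re, Complex.re_sum, Complex.exp_ofReal_mul_I_re] using h

noncomputable section

abbrev ES (m : ℕ) : Type := EuclideanSpace ℝ (Fin (m + 1))

open RealInnerProductSpace in
private lemma integral_inner_cos (m : ℕ) (g : ℝ → ℝ) {u v : ES m} (h : ‖u‖ = ‖v‖) :
    ∫ t : ES m, Real.cos ⟪t, u⟫ * g ‖t‖ = ∫ t : ES m, Real.cos ⟪t, v⟫ * g ‖t‖ := by
  set e : ES m ≃ₗᵢ[ℝ] ES m := Submodule.reflection (ℝ ∙ (u - v))ᗮ with he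
  have heu : e u = v := Submodule.reflection_sub h
  have hev : e v = u := by
    have := Submodule.reflection_reflection (ℝ ∙ (u - v))ᗮ u
    rw [← he] at this
    rw [← heu]; exact this
  have hmp := (e.measurePreserving).integral_comp e.toHomeomorph.measurableEmbedding
    (fun t => Real.cos ⟪t, u⟫ * g ‖t‖)
  rw [← hmp]
  refine integral_congr_ae (Eventually.of_forall fun t => ?_)
  simp only
  rw [← hev, e.inner_map_map, e.norm_map]

private lemma integrable_w (m : ℕ) {α R : ℝ} (hα0 : 0 < α) (hR : 0 < R) :
    Integrable (fun t : ES m => (‖t‖ ^ 2 + 4 * R ^ 2) ^ (-(((m : ℝ) + 2 + α) / 2))) := by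
  set p : ℝ := (m : ℝ) + 2 + α with hp
  have hp0 : 0 < p := by positivity
  have hfr : (Module.finrank ℝ (ES m) : ℝ) < p := by
    rw [finrank_euclideanSpace, Fintype.card_fin]
    push_cast
    linarith
  have h1 : Integrable (fun t : ES m => ((1 : ℝ) + ‖t‖ ^ 2) ^ (-p / 2)) :=
    integrable_rpow_neg_one_add_norm_sq hfr
  set c : ℝ := min 1 (4 * R ^ 2) with hc
  have hc0 : 0 < c := lt_min one_pos (by positivity)
  refine (h1.const_mul (c ^ (-(p / 2)))).mono' ?_ (Eventually.of_forall fun t => ?_)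
  · refine (Continuous.rpow_const ?_ fun t => Or.inl (by positivity)).aestronglyMeasurable
    fun_prop
  · have hb : 0 < ‖t‖ ^ 2 + 4 * R ^ 2 := by positivity
    have hle : c * (1 + ‖t‖ ^ 2) ≤ ‖t‖ ^ 2 + 4 * R ^ 2 := by
      have h1' : c ≤ 1 := min_le_left _ _
      have h2' : c ≤ 4 * R ^ 2 := min_le_right _ _
      nlinarith [sq_nonneg ‖t‖]
    have hpos : 0 < c * (1 + ‖t‖ ^ 2) := by positivity
    calc ‖(‖t‖ ^ 2 + 4 * R ^ 2) ^ (-(p / 2))‖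
        = (‖t‖ ^ 2 + 4 * R ^ 2) ^ (-(p / 2)) := by
          rw [Real.norm_eq_abs, abs_of_pos (Real.rpow_pos_of_pos hb _)]
      _ ≤ (c * (1 + ‖t‖ ^ 2)) ^ (-(p / 2)) :=
          Real.rpow_le_rpow_of_nonpos hpos hle (neg_nonpos.mpr (by positivity))
      _ = c ^ (-(p / 2)) * ((1 : ℝ) + ‖t‖ ^ 2) ^ (-p / 2) := by
          rw [Real.mul_rpow hc0.le (by positivity), neg_div]

set_option maxHeartbeats 1000000 in
open RealInnerProductSpace in
/-- for a unit vector `θ ∈ ℝ^{N-1}` and `R > 0`,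
`∫ (1 + ∏ᵢ cos(tᵢθᵢ))(|t|²+4R²)^{-(N+α)/2} dt = ∫ (1 + cos t₁)(|t|²+4R²)^{-(N+α)/2} dt`,
both integrals being absolutely convergent; in particular the left-hand side depends only
on `R` and not on `θ`.  Here `N = m + 2 ≥ 2`. -/
theorem statement_7 (m : ℕ) (α R : ℝ) (hα : α ∈ Set.Ioo (0 : ℝ) 1) (hR : 0 < R)
    (θ : ES m) (hθ : ‖θ‖ = 1) :
    Integrable (fun t : ES m =>
        (1 + ∏ i, Real.cos (t i * θ i)) * (‖t‖ ^ 2 + 4 * R ^ 2) ^ (-(((m : ℝ) + 2 + α) / 2))) ∧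
      Integrable (fun t : ES m =>
        (1 + Real.cos (t 0)) * (‖t‖ ^ 2 + 4 * R ^ 2) ^ (-(((m : ℝ) + 2 + α) / 2))) ∧
      ∫ t : ES m, (1 + ∏ i, Real.cos (t i * θ i)) * (‖t‖ ^ 2 + 4 * R ^ 2) ^ (-(((m : ℝ) + 2 + α) / 2))
        = ∫ t : ES m, (1 + Real.cos (t 0)) * (‖t‖ ^ 2 + 4 * R ^ 2) ^ (-(((m : ℝ) + 2 + α) / 2)) := by
  obtain ⟨hα0, hα1⟩ := hα
  set p : ℝ := -(((m : ℝ) + 2 + α) / 2) with hpdef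
  set w : ES m → ℝ := fun t => (‖t‖ ^ 2 + 4 * R ^ 2) ^ p with hwdef
  have hw : Integrable w := integrable_w m hα0 hR
  have hcont : ∀ i : Fin (m+1), Continuous fun t : ES m => t i :=
    fun i => (EuclideanSpace.proj i).continuous
  -- the signed vectors
  set Θ : (Fin (m+1) → Bool) → ES m :=
    fun s => (WithLp.equiv 2 _).symm (fun i => (if s i then (1:ℝ) else -1) * θ i) with hTdef
  have hΘnorm : ∀ s, ‖Θ s‖ = 1 := by
    intro s
    have h1 := EuclideanSpace.norm_eq (Θ s)
    have h2 := EuclideanSpace.norm_eq θ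
    have h3 : ‖Θ s‖ = ‖θ‖ := by
      rw [h1, h2]
      congr 1
      refine Finset.sum_congr rfl fun i _ => ?_
      cases hsi : s i <;> simp [hTdef, hsi]
    rw [h3, hθ]
  have hΘinner : ∀ s (t : ES m),
      ⟪t, Θ s⟫ = ∑ i, (if s i then (1:ℝ) else -1) * (t i * θ i) := by
    intro s t
    simp only [hTdef, PiLp.inner_apply, RCLike.inner_apply, conj_trivial,
      WithLp.equiv_symm_apply, PiLp.toLp_apply]
    exact Finset.sum_congr rfl fun i _ => by ring
  have hsingle_norm : ‖(EuclideanSpace.single 0 (1:ℝ) : ES m)‖ = 1 := by simp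
  have hsingle_inner : ∀ t : ES m, ⟪t, (EuclideanSpace.single 0 (1:ℝ) : ES m)⟫ = t 0 := by
    intro t
    rw [EuclideanSpace.inner_single_right]; simp
  -- integrability of the various integrands
  have hprod_cont : Continuous (fun t : ES m => ∏ i, Real.cos (t i * θ i)) :=
    continuous_finset_prod _ fun i _ =>
      Real.continuous_cos.comp ((hcont i).mul continuous_const)
  have hprod_bdd : ∀ t : ES m, ‖∏ i, Real.cos (t i * θ i)‖ ≤ 1 := by
    intro t
    rw [Real.norm_eq_abs, Finset.abs_prod]
    exact Finset.prod_le_one (fun i _ => abs_nonneg _) (fun i _ => Real.abs_cos_le_one _)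
  have hint1 : Integrable (fun t : ES m => (1 + ∏ i, Real.cos (t i * θ i)) * w t) := by
    refine hw.bdd_mul (continuous_const.add hprod_cont).aestronglyMeasurable (c := 2) (Eventually.of_forall fun t => ?_)
    calc ‖1 + ∏ i, Real.cos (t i * θ i)‖ ≤ ‖(1:ℝ)‖ + ‖∏ i, Real.cos (t i * θ i)‖ :=
          norm_add_le _ _
      _ ≤ 2 := by have := hprod_bdd t; rw [norm_one]; linarith
  have hint2 : Integrable (fun t : ES m => (1 + Real.cos (t 0)) * w t) := by
    refine hw.bdd_mul (continuous_const.add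
      (Real.continuous_cos.comp (hcont 0))).aestronglyMeasurable (c := 2) (Eventually.of_forall fun t => ?_)
    calc ‖1 + Real.cos (t 0)‖ ≤ ‖(1:ℝ)‖ + ‖Real.cos (t 0)‖ := norm_add_le _ _
      _ ≤ 2 := by
          have := Real.abs_cos_le_one (t 0)
          rw [norm_one, Real.norm_eq_abs]; linarith
  have hintcos : ∀ v : ES m, Integrable (fun t : ES m => Real.cos ⟪t, v⟫ * w t) := by
    intro v
    refine hw.bdd_mul (Real.continuous_cos.comp
      (continuous_id.inner continuous_const)).aestronglyMeasurable (c := 1) (Eventually.of_forall fun t => ?_)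
    rw [Real.norm_eq_abs]; exact Real.abs_cos_le_one _
  have hintcos0 : Integrable (fun t : ES m => Real.cos (t 0) * w t) := by
    refine hw.bdd_mul (Real.continuous_cos.comp (hcont 0)).aestronglyMeasurable (c := 1) (Eventually.of_forall fun t => ?_)
    rw [Real.norm_eq_abs]; exact Real.abs_cos_le_one _
  refine ⟨hint1, hint2, ?_⟩
  -- pointwise rewriting of the left integrand
  have hPC : ∀ t : ES m, (1 + ∏ i, Real.cos (t i * θ i)) * w t
      = w t + (∑ s : Fin (m+1) → Bool, Real.cos ⟪t, Θ s⟫ * w t) / 2 ^ (m+1) := by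
    intro t
    simp only [hΘinner]
    rw [add_mul, one_mul, prod_cos_eq (m+1) (fun i => t i * θ i), div_mul_eq_mul_div,
      Finset.sum_mul]
  -- each rotated integral equals the `t 0` one
  have hrot : ∀ v : ES m, ‖v‖ = 1 →
      (∫ t : ES m, Real.cos ⟪t, v⟫ * w t) = ∫ t : ES m, Real.cos (t 0) * w t := by
    intro v hv
    have h := integral_inner_cos m (fun x => (x ^ 2 + 4 * R ^ 2) ^ p)
      (u := v) (v := EuclideanSpace.single 0 (1:ℝ)) (hv.trans hsingle_norm.symm)
    calc (∫ t : ES m, Real.cos ⟪t, v⟫ * w t)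
        = ∫ t : ES m, Real.cos ⟪t, (EuclideanSpace.single 0 (1:ℝ) : ES m)⟫ * w t := h
      _ = ∫ t : ES m, Real.cos (t 0) * w t := by
          refine integral_congr_ae (Eventually.of_forall fun t => ?_)
          simp only [hsingle_inner]
  calc (∫ t : ES m, (1 + ∏ i, Real.cos (t i * θ i)) * w t)
      = ∫ t : ES m, (w t + (∑ s : Fin (m+1) → Bool, Real.cos ⟪t, Θ s⟫ * w t) / 2 ^ (m+1)) :=
        integral_congr_ae (Eventually.of_forall hPC)
    _ = (∫ t : ES m, w t)
          + (∫ t : ES m, (∑ s : Fin (m+1) → Bool, Real.cos ⟪t, Θ s⟫ * w t) / 2 ^ (m+1)) :=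
        integral_add hw ((integrable_finset_sum _ fun s _ => hintcos (Θ s)).div_const _)
    _ = (∫ t : ES m, w t)
          + (∑ s : Fin (m+1) → Bool, ∫ t : ES m, Real.cos ⟪t, Θ s⟫ * w t) / 2 ^ (m+1) := by
        rw [integral_div, integral_finset_sum _ fun s _ => hintcos (Θ s)]
    _ = (∫ t : ES m, w t) + (∫ t : ES m, Real.cos (t 0) * w t) := by
        congr 1
        rw [Finset.sum_congr rfl fun s _ => hrot (Θ s) (hΘnorm s), Finset.sum_const,
          Finset.card_univ]
        simp only [Fintype.card_fun, Fintype.card_bool, Fintype.card_fin, nsmul_eq_mul]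
        push_cast
        rw [mul_div_cancel_left₀ _ (by positivity : ((2:ℝ) ^ (m+1)) ≠ 0)]
    _ = ∫ t : ES m, (1 + Real.cos (t 0)) * w t := by
        rw [← integral_add hw hintcos0]
        refine integral_congr_ae (Eventually.of_forall fun t => ?_)
        ring
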